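/- Let G be a directed Eulerian graph without parallel edges or self-loops such that the intersection graph G_I of a simple-cycle decomposition of G is a tree. Then for any fixed node r of G, G has a unique arborescence rooted at r directed towards r (i.e., t(G) = 1). -/

import Mathlib

/-- The underlying undirected simple graph of a directed graph `E` (no self-loops). -/
def underlyingUG {V : Type*} (E : V → V → Prop) : SimpleGraph V where
  Adj a b := a ≠ b ∧ (E a b ∨ E b a)
  symm := ⟨fun a b h => ⟨h.1.symm, h.2.symm⟩⟩
  loopless := ⟨fun a h => h.1 rfl⟩

/-- Out-degree of `v`: number of out-neighbors. -/
noncomputable def outdeg {V : Type*} (E : V → V → Prop) (v : V) : ℕ := Set.ncard {w | E v w}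

/-- In-degree of `v`: number of in-neighbors. -/
noncomputable def indeg {V : Type*} (E : V → V → Prop) (v : V) : ℕ := Set.ncard {u | E u v}

/-- The cyclic sequence of consecutive pairs of a circuit given as a vertex list. -/
def cyclicPairs {V : Type*} (c : List V) : List (V × V) := c.zip (c.rotate 1)

/-- `c` is an Eulerian circuit: a nonempty closed walk using every edge exactly once. -/
def IsEulerianCircuit {V : Type*} (E : V → V → Prop) (c : List V) : Prop :=
  c ≠ [] ∧ (cyclicPairs c).Nodup ∧ ∀ p : V × V, p ∈ cyclicPairs c ↔ E p.1 p.2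

/-- The walk `q` appears (cyclically, as consecutive edges) in the circuit `c`. -/
def Appears {V : Type*} (q c : List V) : Prop :=
  ∃ k, (q.zip q.tail) <:+: cyclicPairs (c.rotate k)

/-- `v` is a cut node of the connected undirected graph `H`. -/
def IsCutNode {V : Type*} (H : SimpleGraph V) (v : V) : Prop :=
  ¬ (H.induce {u | u ≠ v}).Connected

/-- The underlying undirected graph with node `v` (and incident edges) removed. -/
def delNode {V : Type*} (E : V → V → Prop) (v : V) := (underlyingUG E).induce {u | u ≠ v}

/-- `T` is an arborescence of `E` rooted at `r` and directed towards `r`: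
every node other than `r` has out-degree exactly one in `T`, `r` has out-degree zero,
and every node reaches `r` by a directed path in `T`. -/
def IsArborescenceTowards {V : Type*} (E : V → V → Prop) (r : V) (T : Set (V × V)) : Prop :=
  (∀ p ∈ T, E p.1 p.2) ∧ (∀ x : V, x ≠ r → ∃! y : V, (x, y) ∈ T) ∧
  (∀ y : V, (r, y) ∉ T) ∧ ∀ x : V, Relation.ReflTransGen (fun a b => (a, b) ∈ T) x r

/-- The intersection graph of a simple-cycle decomposition `c`. -/
def intersectionGraph {V : Type*} {m : ℕ} (c : Fin m → List V) : SimpleGraph (Fin m) where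
  Adj i j := i ≠ j ∧ ∃ x : V, x ∈ c i ∧ x ∈ c j
  symm := ⟨fun i j h => ⟨h.1.symm, h.2.imp fun _ hx => hx.symm⟩⟩
  loopless := ⟨fun i h => h.1 rfl⟩

namespace TreeArbAux
set_option linter.unusedVariables false
set_option linter.unusedSectionVars false
variable {V : Type*}

lemma cp_length (l : List V) : (cyclicPairs l).length = l.length := by
  simp [cyclicPairs]

lemma cp_mem' {l : List V} {p : V × V} (hp : p ∈ cyclicPairs l) : p.1 ∈ l ∧ p.2 ∈ l := by
  obtain ⟨x, y⟩ := p
  obtain ⟨h1, h2⟩ := List.of_mem_zip hp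
  exact ⟨h1, List.mem_rotate.1 h2⟩

lemma cp_get {l : List V} {k : ℕ} (hk : k < l.length) (hk2 : (k + 1) % l.length < l.length) :
    (l[k], l[(k + 1) % l.length]) ∈ cyclicPairs l := by
  have hkr : k < (l.rotate 1).length := by simpa using hk
  have hk' : k < (cyclicPairs l).length := by simpa [cp_length] using hk
  have h1 : (cyclicPairs l)[k] = (l[k], (l.rotate 1)[k]) := List.getElem_zip
  have h2 : (l.rotate 1)[k] = l[(k + 1) % l.length] := List.getElem_rotate l 1 k hkr
  have h3 := List.getElem_mem hk'
  rw [h1, h2] at h3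
  exact h3

lemma cp_exists {l : List V} {x : V} (hx : x ∈ l) : ∃ y, (x, y) ∈ cyclicPairs l := by
  obtain ⟨k, hk, rfl⟩ := List.mem_iff_getElem.1 hx
  exact ⟨_, cp_get hk (Nat.mod_lt _ (by omega))⟩

lemma cp_fst_unique {l : List V} (hnd : l.Nodup) {x y₁ y₂ : V}
    (h1 : (x, y₁) ∈ cyclicPairs l) (h2 : (x, y₂) ∈ cyclicPairs l) : y₁ = y₂ := by
  obtain ⟨k1, hk1, he1⟩ := List.mem_iff_getElem.1 h1
  obtain ⟨k2, hk2, he2⟩ := List.mem_iff_getElem.1 h2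
  have hL1 : k1 < l.length := by simpa [cp_length] using hk1
  have hL2 : k2 < l.length := by simpa [cp_length] using hk2
  have hr1 : k1 < (l.rotate 1).length := by simpa using hL1
  have hr2 : k2 < (l.rotate 1).length := by simpa using hL2
  have e1 : (cyclicPairs l)[k1] = (l[k1], (l.rotate 1)[k1]) := List.getElem_zip
  have e2 : (cyclicPairs l)[k2] = (l[k2], (l.rotate 1)[k2]) := List.getElem_zip
  rw [e1] at he1
  rw [e2] at he2
  have hx1 : l[k1] = x := congrArg Prod.fst he1
  have hx2 : l[k2] = x := congrArg Prod.fst he2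
  have hk12 : k1 = k2 := (hnd.getElem_inj_iff).1 (hx1.trans hx2.symm)
  subst hk12
  have := (congrArg Prod.snd he1).symm.trans (congrArg Prod.snd he2)
  exact this

lemma cp_reach {l : List V} (hnd : l.Nodup) {a b : V} (ha : a ∈ l) (hb : b ∈ l) :
    Relation.ReflTransGen (fun x y => (x, y) ∈ cyclicPairs l ∧ x ≠ b) a b := by
  obtain ⟨ia, hia, rfl⟩ := List.mem_iff_getElem.1 ha
  obtain ⟨ib, hib, rfl⟩ := List.mem_iff_getElem.1 hb
  have hL : 0 < l.length := by omega
  set L := l.length with hLdef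
  set n := (ib + L - ia) % L with hndef
  have hnL : n < L := Nat.mod_lt _ hL
  have hn : (ia + n) % L = ib := by
    rw [hndef, Nat.add_mod_mod]
    have h1 : ia + (ib + L - ia) = ib + L := by omega
    rw [h1, Nat.add_mod_right, Nat.mod_eq_of_lt hib]
  have key : ∀ t, t ≤ n →
      Relation.ReflTransGen (fun x y => (x, y) ∈ cyclicPairs l ∧ x ≠ l[ib])
        (l[ia]) (l[(ia + t) % L]'(Nat.mod_lt _ hL)) := by
    intro t
    induction t with
    | zero =>
      intro _
      have h0 : (ia + 0) % L = ia := by simpa using Nat.mod_eq_of_lt hia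
      have : l[(ia + 0) % L]'(Nat.mod_lt _ hL) = l[ia] := by simp only [h0]
      rw [this]
    | succ t ih =>
      intro h
      have ht : t ≤ n := Nat.le_of_succ_le h
      refine (ih ht).tail ?_
      have hklt : (ia + t) % L < L := Nat.mod_lt _ hL
      have hmod : ((ia + t) % L + 1) % L = (ia + (t + 1)) % L := by
        rw [Nat.mod_add_mod, Nat.add_assoc]
      constructor
      · have hcp := cp_get (l := l) (k := (ia + t) % L) hklt (by rw [hmod]; exact Nat.mod_lt _ hL)
        have : l[((ia + t) % L + 1) % L]'(by rw [hmod]; exact Nat.mod_lt _ hL)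
            = l[(ia + (t + 1)) % L]'(Nat.mod_lt _ hL) := by simp only [hmod]
        rw [this] at hcp
        exact hcp
      · intro hcon
        have heq : (ia + t) % L = ib := (hnd.getElem_inj_iff).1 hcon
        have h1 : (ia + t) % L = (ia + n) % L := by rw [heq, hn]
        have h2 : t % L = n % L := Nat.ModEq.add_left_cancel' ia h1
        rw [Nat.mod_eq_of_lt (by omega : t < L), Nat.mod_eq_of_lt hnL] at h2
        omega
  have hfin := key n le_rfl
  have : l[(ia + n) % L]'(Nat.mod_lt _ hL) = l[ib] := by simp only [hn]
  rwa [this] at hfin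

open SimpleGraph
variable {W : Type*} [DecidableEq W] {H : SimpleGraph W} {r0 : W}

lemma tree_stepA (hH : H.IsTree) (pth : ∀ w, H.Walk w r0) (hp : ∀ w, (pth w).IsPath)
    (hq : ∀ w (q : H.Walk w r0), q.IsPath → q = pth w)
    {i j : W} (hij : H.Adj i j) (hmem : j ∈ (pth i).support) :
    (pth j).length + 1 = (pth i).length ∧ j = (pth i).getVert 1 := by
  have hq1 : ((pth i).takeUntil j hmem).IsPath := (hp i).takeUntil hmem
  have hq2 : ((pth i).dropUntil j hmem).IsPath := (hp i).dropUntil hmem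
  have hq2e : (pth i).dropUntil j hmem = pth j := hq j _ hq2
  have hsingcoe : ((Path.singleton hij : H.Path i j) : H.Walk i j) = Walk.cons hij Walk.nil := rfl
  have htake : (pth i).takeUntil j hmem = Walk.cons hij Walk.nil := by
    have := (hH.existsUnique_path i j).unique hq1 (Path.singleton hij).2
    rwa [hsingcoe] at this
  have hspec := (pth i).take_spec hmem
  rw [htake] at hspec
  constructor
  · have hlen := congrArg Walk.length hspec
    rw [Walk.length_append] at hlen
    simp only [Walk.length_cons, Walk.length_nil, hq2e] at hlen
    omega
  · rw [← hspec, Walk.cons_append, Walk.getVert_cons_succ, Walk.nil_append, Walk.getVert_zero]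

lemma tree_stepB (pth : ∀ w, H.Walk w r0) (hp : ∀ w, (pth w).IsPath)
    (hq : ∀ w (q : H.Walk w r0), q.IsPath → q = pth w)
    {i j : W} (hij : H.Adj i j) (hmem : j ∉ (pth i).support) :
    (pth j).length = (pth i).length + 1 := by
  have hcons : (Walk.cons hij.symm (pth i)).IsPath := (hp i).cons hmem
  have heq := hq j _ hcons
  have hlen := congrArg Walk.length heq
  simpa using hlen.symm

lemma tree_N (hH : H.IsTree) (pth : ∀ w, H.Walk w r0) (hp : ∀ w, (pth w).IsPath)
    (hq : ∀ w (q : H.Walk w r0), q.IsPath → q = pth w)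
    {i j : W} (hij : H.Adj i j) :
    (pth j).length + 1 = (pth i).length ∨ (pth i).length + 1 = (pth j).length := by
  by_cases hmem : j ∈ (pth i).support
  · exact Or.inl (tree_stepA hH pth hp hq hij hmem).1
  · exact Or.inr (tree_stepB pth hp hq hij hmem).symm

lemma tree_P (hH : H.IsTree) (pth : ∀ w, H.Walk w r0) (hp : ∀ w, (pth w).IsPath)
    (hq : ∀ w (q : H.Walk w r0), q.IsPath → q = pth w)
    {i j : W} (hij : H.Adj i j) (hd : (pth j).length + 1 = (pth i).length) :
    j = (pth i).getVert 1 := by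
  by_cases hmem : j ∈ (pth i).support
  · exact (tree_stepA hH pth hp hq hij hmem).2
  · have := tree_stepB pth hp hq hij hmem
    omega

end TreeArbAux

open TreeArbAux SimpleGraph

/-- If the intersection graph of a simple-cycle decomposition of `G` is a tree (in
particular, any two cycles share at most one node), then for every node `r`, `G` has a
unique arborescence rooted at `r` and directed towards `r`. -/
theorem tree_intersection_unique_arborescence {V : Type*} [Fintype V] (E : V → V → Prop)
    (hloop : ∀ x : V, ¬ E x x) (hconn : (underlyingUG E).Connected)
    (heul : ∃ c : List V, IsEulerianCircuit E c)
    (m : ℕ) (c : Fin m → List V)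
    (hcyc : ∀ i : Fin m, c i ≠ [] ∧ (c i).Nodup ∧ ∀ p ∈ cyclicPairs (c i), E p.1 p.2)
    (hpart : ∀ p : V × V, E p.1 p.2 → ∃! i : Fin m, p ∈ cyclicPairs (c i))
    (hshare : ∀ i j : Fin m, i ≠ j → ∀ x y : V,
      x ∈ c i → x ∈ c j → y ∈ c i → y ∈ c j → x = y)
    (htree : (intersectionGraph c).IsTree) :
    ∀ r : V, ∃! T : Set (V × V), IsArborescenceTowards E r T := by
  classical
  intro r
  -- an edge exists
  obtain ⟨ec, hecne, hecnd, heciff⟩ := heul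
  have hcp_ne : cyclicPairs ec ≠ [] := by
    intro h
    have := cp_length ec
    rw [h] at this
    simp at this
    exact hecne (List.length_eq_zero_iff.1 this.symm)
  obtain ⟨p₀, hp₀⟩ := List.exists_mem_of_ne_nil _ hcp_ne
  have hE₀ : E p₀.1 p₀.2 := (heciff p₀).1 hp₀
  -- every vertex lies on some cycle
  have hvc : ∀ v : V, ∃ i, v ∈ c i := by
    intro v
    obtain ⟨w⟩ := hconn.preconnected v p₀.1
    cases w with
    | nil =>
      obtain ⟨i, hi, -⟩ := hpart p₀ hE₀
      exact ⟨i, (cp_mem' hi).1⟩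
    | cons h q =>
      obtain ⟨hne, hor⟩ := h
      rcases hor with he | he
      · obtain ⟨i, hi, -⟩ := hpart (v, _) he
        exact ⟨i, (cp_mem' hi).1⟩
      · obtain ⟨i, hi, -⟩ := hpart (_, v) he
        exact ⟨i, (cp_mem' hi).2⟩
  obtain ⟨i₀, hri₀⟩ := hvc r
  -- tree-path setup
  choose pth hpth using fun k => htree.existsUnique_path k i₀
  set d : Fin m → ℕ := fun k => (pth k).length with hd
  have hpthP : ∀ k, (pth k).IsPath := fun k => (hpth k).1
  have hpthU : ∀ k (q : (intersectionGraph c).Walk k i₀), q.IsPath → q = pth k :=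
    fun k q hq => (hpth k).2 q hq
  have hdi₀ : d i₀ = 0 := by
    have := hpthU i₀ Walk.nil Walk.IsPath.nil
    have := congrArg Walk.length this
    simpa [hd] using this.symm
  have hd0 : ∀ k, d k = 0 → k = i₀ := fun k h => Walk.eq_of_length_eq_zero h
  have hAdj : ∀ {i j : Fin m} {x : V}, i ≠ j → x ∈ c i → x ∈ c j →
      (intersectionGraph c).Adj i j := fun hne hx1 hx2 => ⟨hne, _, hx1, hx2⟩
  have hN : ∀ {i j : Fin m}, (intersectionGraph c).Adj i j → d j + 1 = d i ∨ d i + 1 = d j :=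
    fun hij => tree_N htree pth hpthP hpthU hij
  have hP : ∀ {i j : Fin m}, (intersectionGraph c).Adj i j → d j + 1 = d i →
      j = (pth i).getVert 1 := fun hij hdd => tree_P htree pth hpthP hpthU hij hdd
  -- choose a minimal-distance cycle through each vertex
  have hminE : ∀ v : V, ∃ i, v ∈ c i ∧ ∀ j, v ∈ c j → d i ≤ d j := by
    intro v
    obtain ⟨i, hi⟩ := hvc v
    obtain ⟨k, hk, hkmin⟩ := Finset.exists_min_image
      (Finset.univ.filter fun j => v ∈ c j) d ⟨i, by simp [hi]⟩
    exact ⟨k, by simpa using hk, fun j hj => hkmin j (by simp [hj])⟩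
  choose cyc hcycmem hcycmin using hminE
  have hminuniq : ∀ v i, v ∈ c i → d i ≤ d (cyc v) → i = cyc v := by
    intro v i hvi hle
    by_contra hne
    have hadj := hAdj hne hvi (hcycmem v)
    have h1 := hN hadj
    have h2 := hcycmin v i hvi
    omega
  -- the successor map
  choose nxt hnxt using fun v => cp_exists (hcycmem v)
  -- parent cycle and gate vertex
  have hparE : ∀ i : Fin m, ∃ (pi : Fin m) (g : V), i ≠ i₀ →
      (intersectionGraph c).Adj i pi ∧ d pi + 1 = d i ∧ g ∈ c i ∧ g ∈ c pi ∧
      pi = (pth i).getVert 1 := by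
    intro i
    by_cases hi : i = i₀
    · exact ⟨i₀, r, fun h => absurd hi h⟩
    · have hlen : 0 < d i := by
        rcases Nat.eq_zero_or_pos (d i) with h | h
        · exact absurd (hd0 i h) hi
        · exact h
      have hadj : (intersectionGraph c).Adj i ((pth i).getVert 1) := by
        have := (pth i).adj_getVert_succ (i := 0) hlen
        simpa using this
      have hmem : (pth i).getVert 1 ∈ (pth i).support :=
        Walk.mem_support_iff_exists_getVert.2 ⟨1, rfl, hlen⟩
      have hA := tree_stepA htree pth hpthP hpthU hadj hmem
      obtain ⟨hne', x, hx1, hx2⟩ := hadj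
      exact ⟨_, x, fun _ => ⟨⟨hne', x, hx1, hx2⟩, hA.1, hx1, hx2, rfl⟩⟩
  choose par gat hpargat using hparE
  -- gate uniqueness
  have hgate : ∀ i, i ≠ i₀ → ∀ j, j ≠ i → d j < d i → ∀ x, x ∈ c i → x ∈ c j → x = gat i := by
    intro i hi j hjne hdj x hxi hxj
    obtain ⟨hadjp, hdp, hg1, hg2, hpv⟩ := hpargat i hi
    have hadj : (intersectionGraph c).Adj i j := hAdj (fun h => hjne h.symm) hxi hxj
    have hdj1 : d j + 1 = d i := by
      rcases hN hadj with h | h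
      · exact h
      · omega
    have hjp : j = par i := by rw [hP hadj hdj1, ← hpv]
    exact hshare i (par i) hadjp.1 x (gat i) hxi (hjp ▸ hxj) hg1 hg2
  -- the canonical cycle of a non-gate member of a cycle is that cycle
  have hG1 : ∀ i, ∀ x, x ∈ c i → (i = i₀ ∨ x ≠ gat i) → cyc x = i := by
    intro i x hxi hcase
    have hle : d i ≤ d (cyc x) := by
      by_contra hlt
      push_neg at hlt
      have hii₀ : i ≠ i₀ := by intro h; rw [h, hdi₀] at hlt; omega
      have hne : cyc x ≠ i := by intro h; rw [h] at hlt; omega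
      have hx := hgate i hii₀ (cyc x) hne hlt x hxi (hcycmem x)
      rcases hcase with h | h
      · exact hii₀ h
      · exact h hx
    exact (hminuniq x i hxi hle).symm
  have hG2 : ∀ i, i ≠ i₀ → r ∈ c i → gat i = r := by
    intro i hi hr
    have hdi : 0 < d i := by
      rcases Nat.eq_zero_or_pos (d i) with h | h
      · exact absurd (hd0 i h) hi
      · exact h
    exact (hgate i hi i₀ (fun h => hi h.symm) (by omega) r hr hri₀).symm
  -- the canonical arborescence
  set T : Set (V × V) := {p | p.1 ≠ r ∧ p.2 = nxt p.1} with hT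
  have hTedge : ∀ p ∈ T, E p.1 p.2 := by
    rintro ⟨a, b⟩ ⟨ha, hb⟩
    have hb' : b = nxt a := hb
    show E a b
    rw [hb']
    exact (hcyc (cyc a)).2.2 (a, nxt a) (hnxt a)
  have hstep_of_cp : ∀ (i : Fin m) (tgt : V), (i = i₀ → tgt = r) → (i ≠ i₀ → tgt = gat i) →
      ∀ x y, ((x, y) ∈ cyclicPairs (c i) ∧ x ≠ tgt) → (x, y) ∈ T := by
    intro i tgt htgt0 htgt1 x y ⟨hxy, hxt⟩
    have hxi : x ∈ c i := (cp_mem' hxy).1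
    have hcycx : cyc x = i := by
      apply hG1 i x hxi
      by_cases hi : i = i₀
      · exact Or.inl hi
      · right; rw [← htgt1 hi]; exact hxt
    have hxr : x ≠ r := by
      by_cases hi : i = i₀
      · rw [← htgt0 hi]; exact hxt
      · intro hxr
        have hrc : r ∈ c i := hxr ▸ hxi
        have := hG2 i hi hrc
        exact hxt (by rw [htgt1 hi, this, hxr])
    refine ⟨hxr, ?_⟩
    have h2 := hnxt x
    rw [hcycx] at h2
    exact cp_fst_unique (hcyc i).2.1 hxy h2
  have hreach : ∀ D, ∀ v, d (cyc v) < D →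
      Relation.ReflTransGen (fun a b => (a, b) ∈ T) v r := by
    intro D
    induction D with
    | zero => intro v h; omega
    | succ D ih =>
      intro v hv
      by_cases hvr : v = r
      · subst hvr; exact .refl
      by_cases hi : cyc v = i₀
      · have hrc : r ∈ c (cyc v) := hi ▸ hri₀
        refine Relation.ReflTransGen.mono ?_ _ _
          (cp_reach (hcyc (cyc v)).2.1 (hcycmem v) hrc)
        intro x y hxy
        exact hstep_of_cp (cyc v) r (fun _ => rfl) (fun h => absurd hi h) x y hxy
      · obtain ⟨hadjp, hdp, hg1, hg2, -⟩ := hpargat (cyc v) hi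
        have h1 : Relation.ReflTransGen (fun a b => (a, b) ∈ T) v (gat (cyc v)) := by
          refine Relation.ReflTransGen.mono ?_ _ _
            (cp_reach (hcyc (cyc v)).2.1 (hcycmem v) hg1)
          intro x y hxy
          exact hstep_of_cp (cyc v) (gat (cyc v)) (fun h => absurd h hi) (fun _ => rfl) x y hxy
        have h2 : d (cyc (gat (cyc v))) < D := by
          have := hcycmin (gat (cyc v)) (par (cyc v)) hg2
          omega
        exact h1.trans (ih _ h2)
  have hexist : IsArborescenceTowards E r T := by
    refine ⟨hTedge, ?_, ?_, ?_⟩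
    · intro x hx
      exact ⟨nxt x, ⟨hx, rfl⟩, fun y hy => hy.2⟩
    · intro y hy
      exact hy.1 rfl
    · intro x
      exact hreach (d (cyc x) + 1) x (Nat.lt_succ_self _)
  refine ⟨T, hexist, ?_⟩
  rintro T' ⟨hT'edge, hT'uniq, hT'root, hT'reach⟩
  -- no "bad" edge: every edge of T' out of x lies in x's canonical cycle
  have hnobad : ∀ x y (j : Fin m), (x, y) ∈ T' → (x, y) ∈ cyclicPairs (c j) → j = cyc x := by
    by_contra hbad
    push_neg at hbad
    set Bad : Finset (Fin m) := Finset.univ.filter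
      (fun j => ∃ x y, (x, y) ∈ T' ∧ (x, y) ∈ cyclicPairs (c j) ∧ j ≠ cyc x) with hBad
    have hBadne : Bad.Nonempty := by
      obtain ⟨x, y, j, h1, h2, h3⟩ := hbad
      exact ⟨j, by simp [hBad]; exact ⟨x, y, h1, h2, h3⟩⟩
    obtain ⟨j, hjB, hjmax⟩ := Finset.exists_max_image Bad d hBadne
    simp only [hBad, Finset.mem_filter, Finset.mem_univ, true_and] at hjB
    obtain ⟨x, y, hT'xy, hcp, hjne⟩ := hjB
    have hxcj : x ∈ c j := (cp_mem' hcp).1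
    have hxr : x ≠ r := fun h => hT'root y (h ▸ hT'xy)
    have hdlt : d (cyc x) < d j := by
      have h1 := hcycmin x j hxcj
      have h2 : ¬ d j ≤ d (cyc x) := fun hle => hjne (hminuniq x j hxcj hle)
      omega
    have hji₀ : j ≠ i₀ := by
      intro h
      rw [h, hdi₀] at hdlt
      omega
    have hxg : x = gat j := by
      by_contra hne
      exact hjne ((hG1 j x hxcj (Or.inr hne)).symm)
    have hrcj : r ∉ c j := by
      intro hrc
      exact hxr (by rw [hxg, hG2 j hji₀ hrc])
    -- edges of T' never leave c j
    have hclosure : ∀ w, w ∈ c j → ∀ z, (w, z) ∈ T' → z ∈ c j := by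
      intro w hwj z hwz
      have hwr : w ≠ r := fun h => hrcj (h ▸ hwj)
      have hEwz : E w z := hT'edge _ hwz
      obtain ⟨k, hk, -⟩ := hpart (w, z) hEwz
      by_cases hkj : k = j
      · exact hkj ▸ (cp_mem' hk).2
      · have hwk : w ∈ c k := (cp_mem' hk).1
        have hadj : (intersectionGraph c).Adj j k := hAdj (fun h => hkj h.symm) hwj hwk
        rcases hN hadj with hlt | hgt
        · -- k is closer to the root: w must be the gate of j, i.e. w = x
          have hw : w = gat j := hgate j hji₀ k hkj (by omega) w hwj hwk
          have hwx : w = x := by rw [hw, ← hxg]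
          subst hwx
          obtain ⟨y', hy', huy⟩ := hT'uniq w hwr
          have hz : z = y' := huy z hwz
          have hy : y = y' := huy y hT'xy
          rw [hz, ← hy]
          exact (cp_mem' hcp).2
        · -- k is farther: k would be a worse bad cycle
          exfalso
          have hkBad : k ∈ Bad := by
            simp only [hBad, Finset.mem_filter, Finset.mem_univ, true_and]
            refine ⟨w, z, hwz, hk, ?_⟩
            intro hkc
            have := hcycmin w j hwj
            rw [← hkc] at this
            omega
          have := hjmax k hkBad
          omega
    have hstay : ∀ a b : V, Relation.ReflTransGen (fun a b => (a, b) ∈ T') a b →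
        a ∈ c j → b ∈ c j := by
      intro a b h
      induction h with
      | refl => exact id
      | tail h1 h2 ih => intro ha; exact hclosure _ (ih ha) _ h2
    exact hrcj (hstay x r (hT'reach x) hxcj)
  -- conclude set equality
  ext ⟨a, b⟩
  constructor
  · intro hab
    have har : a ≠ r := fun h => hT'root b (h ▸ hab)
    have hE := hT'edge _ hab
    obtain ⟨k, hk, -⟩ := hpart (a, b) hE
    have hkc : k = cyc a := hnobad a b k hab hk
    rw [hkc] at hk
    exact ⟨har, cp_fst_unique (hcyc (cyc a)).2.1 hk (hnxt a)⟩
  · rintro ⟨har, hb⟩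
    obtain ⟨y', hy', -⟩ := hT'uniq a har
    have hE := hT'edge _ hy'
    obtain ⟨k, hk, -⟩ := hpart (a, y') hE
    have hkc : k = cyc a := hnobad a y' k hy' hk
    rw [hkc] at hk
    have hy'n : y' = nxt a := cp_fst_unique (hcyc (cyc a)).2.1 hk (hnxt a)
    have : b = y' := by rw [show b = nxt a from hb, hy'n]
    rw [this]
    exact hy'
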